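/- Let p be an even integer with p ≥ 2 and let k ≥ 0. Set q = (2k+1)p + 1 and d = (p-1)(q-1)/2 = (p-1)(2k+1)p/2. Then for every integer i with 0 ≤ i ≤ (p-2)/2, the integer d + i is NOT in the numerical semigroup generated by p and q. Moreover, d + p/2 IS in the semigroup: ((p-1)(2k+1)+1)/2 · p = d + p/2. -/
import Mathlib


/-- For even `p ≥ 2`, `k ≥ 0`, `q = (2k+1)p + 1` and `2d = (p-1)(q-1)`:
for every `0 ≤ i ≤ (p-2)/2`, the integer `d + i` is not in the numerical semigroup
generated by `p` and `q`, while `(((p-1)(2k+1)+1)/2)·p = d + p/2`. -/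
theorem stmt6 (p k q d : ℤ) (hp : 2 ≤ p) (hpe : Even p) (hk : 0 ≤ k)
    (hq : q = (2 * k + 1) * p + 1) (hd : 2 * d = (p - 1) * (q - 1)) :
    (∀ i : ℤ, 0 ≤ i → i ≤ (p - 2) / 2 →
      ¬ ∃ a b : ℤ, 0 ≤ a ∧ 0 ≤ b ∧ a * p + b * q = d + i) ∧
    (((p - 1) * (2 * k + 1) + 1) / 2) * p = d + p / 2 := by
  obtain ⟨m, hm⟩ := hpe
  have hpm : p = 2 * m := by linarith
  subst hpm
  have hm1 : 1 ≤ m := by linarith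
  have hdval : d = (2 * m - 1) * (2 * k + 1) * m := by
    have : (2 * m - 1) * (q - 1) = 2 * ((2 * m - 1) * (2 * k + 1) * m) := by
      rw [hq]; ring
    linarith
  subst hq hdval
  constructor
  · rintro i hi0 hi1 ⟨a, b, ha, hb, heq⟩
    have hi2 : i ≤ m - 1 := by
      have : (2 * m - 2) / 2 = m - 1 := by omega
      rw [this] at hi1; exact hi1
    set t : ℤ := 2 * m * k + m - k - 1 - a - b * (2 * k + 1) with ht
    have hbv : b = m + i + t * (2 * m) := by
      rw [ht]; linear_combination heq
    have htn : 0 ≤ t := by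
      by_contra h
      push_neg at h
      have h1 : t ≤ -1 := by linarith
      have h2 : t * (2 * m) ≤ (-1) * (2 * m) :=
        mul_le_mul_of_nonneg_right h1 (by linarith)
      linarith
    have key : a * (2 * m) =
        -((2 * k + 1) * m * (1 + 2 * i + 4 * m * t)) - m - 2 * m * t := by
      rw [hbv] at heq; linear_combination heq
    have h1 : 0 ≤ m * t := mul_nonneg (by linarith) htn
    have h2 : 0 ≤ a * (2 * m) := mul_nonneg ha (by linarith)
    have h3 : 1 ≤ 1 + 2 * i + 4 * m * t := by linarith
    have h4 : m ≤ (2 * k + 1) * m * (1 + 2 * i + 4 * m * t) := by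
      have := mul_le_mul (by nlinarith : (m : ℤ) ≤ (2 * k + 1) * m) h3
        (by norm_num) (by nlinarith : (0:ℤ) ≤ (2 * k + 1) * m)
      linarith
    linarith
  · have e1 : (2 * m - 1) * (2 * k + 1) + 1 = 2 * (2 * m * k + m - k) := by ring
    have e2 : (2 * m) / 2 = m := by omega
    rw [e1, e2, Int.mul_ediv_cancel_left _ (by norm_num : (2:ℤ) ≠ 0)]
    ring
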